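/- Let t be a monad and c a comonad on a category K and λ : tc ⟶ ct satisfying the multiplication and comultiplication compatibility axioms, the weak unit axiom λ ∘ (η c) = (c ε t) ∘ (c λ) ∘ (c η c) ∘ δ, and the strict counit axiom (ε ▷ t) ∘ λ = t ◁ ε. Then λ satisfies the strict unit axiom λ ∘ (η ▷ c) = c ◁ η, and hence λ is a strict mixed distributive law. (Conditions (v) imply (i) in the lemma.) -/
import Mathlib


open CategoryTheory

universe v₁ u₁ v₂ u₂

variable {K : Type u₁} [Category.{v₁} K]

/-- A weak mixed distributive law `λ : tc ⟶ ct` between a monad `t` and a comonad `c`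
on a category `K`, satisfying the four axioms of Böhm–Lack–Street, stated componentwise. -/
structure WeakMixedDistLaw (t : CategoryTheory.Monad K) (c : CategoryTheory.Comonad K) where
  l : (c.toFunctor ⋙ t.toFunctor) ⟶ (t.toFunctor ⋙ c.toFunctor)
  mul_compat : ∀ X : K, t.μ.app (c.obj X) ≫ l.app X =
    t.map (l.app X) ≫ l.app (t.obj X) ≫ c.map (t.μ.app X)
  comul_compat : ∀ X : K, t.map (c.δ.app X) ≫ l.app (c.obj X) ≫ c.map (l.app X) =
    l.app X ≫ c.δ.app (t.obj X)
  weak_unit : ∀ X : K, t.η.app (c.obj X) ≫ l.app X =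
    c.δ.app X ≫ c.map (t.η.app (c.obj X)) ≫ c.map (l.app X) ≫ c.map (c.ε.app (t.obj X))
  weak_counit : ∀ X : K, l.app X ≫ c.ε.app (t.obj X) =
    t.map (t.η.app (c.obj X)) ≫ t.map (l.app X) ≫ t.map (c.ε.app (t.obj X)) ≫ t.μ.app X

/-- If λ satisfies the multiplication and comultiplication compatibilities, the weak unit
axiom and the strict counit axiom, then it satisfies the strict unit axiom, hence is a strict
mixed distributive law. -/
theorem weak_unit_strict_counit_implies_strict (t : CategoryTheory.Monad K)
    (c : CategoryTheory.Comonad K)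
    (l : (c.toFunctor ⋙ t.toFunctor) ⟶ (t.toFunctor ⋙ c.toFunctor))
    (hmul : ∀ X : K, t.μ.app (c.obj X) ≫ l.app X =
      t.map (l.app X) ≫ l.app (t.obj X) ≫ c.map (t.μ.app X))
    (hcomul : ∀ X : K, t.map (c.δ.app X) ≫ l.app (c.obj X) ≫ c.map (l.app X) =
      l.app X ≫ c.δ.app (t.obj X))
    (hweak_unit : ∀ X : K, t.η.app (c.obj X) ≫ l.app X =
      c.δ.app X ≫ c.map (t.η.app (c.obj X)) ≫ c.map (l.app X) ≫ c.map (c.ε.app (t.obj X)))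
    (hcounit : ∀ X : K, l.app X ≫ c.ε.app (t.obj X) = t.map (c.ε.app X)) :
    ∀ X : K, t.η.app (c.obj X) ≫ l.app X = c.map (t.η.app X) := by
  intro X
  have h1 : c.map (l.app X) ≫ c.map (c.ε.app (t.obj X)) = c.map (t.map (c.ε.app X)) := by
    rw [← c.map_comp, hcounit]
  have h2 : c.map (t.η.app (c.obj X)) ≫ c.map (t.map (c.ε.app X)) = c.map (c.ε.app X ≫ t.η.app X) := by
    rw [← c.map_comp]
    exact congrArg c.map (by simpa using (t.η.naturality (c.ε.app X)).symm)
  calc t.η.app (c.obj X) ≫ l.app X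
      = c.δ.app X ≫ c.map (t.η.app (c.obj X)) ≫ c.map (l.app X) ≫ c.map (c.ε.app (t.obj X)) := hweak_unit X
    _ = c.δ.app X ≫ c.map (c.ε.app X ≫ t.η.app X) := by rw [h1, h2]
    _ = c.map (t.η.app X) := by
        simp
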